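/- For every complex symmetric n×n matrix S there exists an invertible upper-triangular complex matrix B and a partial involution matrix π such that S = Bᵗ·π·B. -/

import Mathlib

open Matrix


/-- A partial permutation matrix: a 0-1 matrix with at most one 1 in each row
and each column. -/
def IsPartialPermMatrix {n : ℕ} (X : Matrix (Fin n) (Fin n) ℂ) : Prop :=
  (∀ i j, X i j = 0 ∨ X i j = 1) ∧
    (∀ i, {j | X i j = 1}.Subsingleton) ∧
    (∀ j, {i | X i j = 1}.Subsingleton)

/-- A partial involution matrix: a symmetric partial permutation matrix. -/
def IsPartialInvolution {n : ℕ} (X : Matrix (Fin n) (Fin n) ℂ) : Prop :=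
  IsPartialPermMatrix X ∧ X.IsSymm

namespace Stmt7Aux

variable {n : ℕ}

abbrev Mat (n : ℕ) := Matrix (Fin n) (Fin n) ℂ

lemma sum_one (f : Fin n → ℂ) (a : Fin n) (h : ∀ x, x ≠ a → f x = 0) :
    ∑ x, f x = f a := by
  apply Finset.sum_eq_single_of_mem a (Finset.mem_univ a)
  intro x _ hx; exact h x hx

lemma sum_two (f : Fin n → ℂ) (a b : Fin n) (hab : a ≠ b)
    (h : ∀ x, x ≠ a → x ≠ b → f x = 0) : ∑ x, f x = f a + f b := by
  have h1 : ∑ x ∈ ({a, b} : Finset (Fin n)), f x = f a + f b := Finset.sum_pair hab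
  rw [← h1]
  symm
  apply Finset.sum_subset (Finset.subset_univ _)
  intro x _ hx
  simp only [Finset.mem_insert, Finset.mem_singleton] at hx
  push_neg at hx
  exact h x hx.1 hx.2

lemma sum_three (f : Fin n → ℂ) (a b c : Fin n) (hab : a ≠ b) (hac : a ≠ c) (hbc : b ≠ c)
    (h : ∀ x, x ≠ a → x ≠ b → x ≠ c → f x = 0) : ∑ x, f x = f a + f b + f c := by
  have h1 : ∑ x ∈ ({a, b, c} : Finset (Fin n)), f x = f a + (f b + f c) := by
    rw [Finset.sum_insert (by simp [hab, hac]), Finset.sum_pair hbc]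
  rw [add_assoc, ← h1]
  symm
  apply Finset.sum_subset (Finset.subset_univ _)
  intro x _ hx
  simp only [Finset.mem_insert, Finset.mem_singleton] at hx
  push_neg at hx
  exact h x hx.1 hx.2.1 hx.2.2

lemma conj_pivot (B : Mat n) (s' : Finset (Fin n))
    (hB : ∀ i j, i ∉ s' ∨ j ∉ s' → B i j = (1 : Mat n) i j) (p q : Fin n)
    (hp : p ∉ s') (hq : q ∉ s') :
    Bᵀ * Matrix.single p q (1:ℂ) * B = Matrix.single p q 1 := by
  ext i j
  have h1 : ∀ l, (Bᵀ * Matrix.single p q (1:ℂ)) i l = B p i * Matrix.single p q (1:ℂ) p l := by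
    intro l
    rw [Matrix.mul_apply]
    rw [sum_one (fun k => Bᵀ i k * Matrix.single p q (1:ℂ) k l) p
      (fun x hx => by simp [Matrix.single, (Ne.symm hx)])]
    simp [Matrix.transpose_apply]
  rw [Matrix.mul_apply]
  simp only [h1]
  rw [sum_one (fun l => B p i * Matrix.single p q (1:ℂ) p l * B l j) q
      (fun x hx => by simp [Matrix.single, (Ne.symm hx)])]
  have hBp : B p i = (1 : Mat n) p i := hB p i (Or.inl hp)
  have hBq : B q j = (1 : Mat n) q j := hB q j (Or.inl hq)
  simp only [hBp, hBq, Matrix.single, Matrix.of_apply, Matrix.one_apply]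
  by_cases h2 : p = i <;> by_cases h3 : q = j <;> simp [h2, h3]

lemma idOutside_mul (s : Finset (Fin n)) (A B : Mat n)
    (hA : ∀ i j, i ∉ s ∨ j ∉ s → A i j = (1 : Mat n) i j)
    (hB : ∀ i j, i ∉ s ∨ j ∉ s → B i j = (1 : Mat n) i j) :
    ∀ i j, i ∉ s ∨ j ∉ s → (A * B) i j = (1 : Mat n) i j := by
  intro i j h
  rcases h with h | h
  · rw [Matrix.mul_apply]
    rw [sum_one (fun k => A i k * B k j) i (fun x hx => by
      show A i x * B x j = 0
      rw [hA i x (Or.inl h), Matrix.one_apply_ne (Ne.symm hx), zero_mul])]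
    rw [hA i i (Or.inl h), Matrix.one_apply_eq, one_mul]
    exact hB i j (Or.inl h)
  · rw [Matrix.mul_apply]
    rw [sum_one (fun k => A i k * B k j) j (fun x hx => by
      show A i x * B x j = 0
      rw [hB x j (Or.inr h), Matrix.one_apply_ne hx, mul_zero])]
    rw [hB j j (Or.inr h), Matrix.one_apply_eq, mul_one]
    exact hA i j (Or.inr h)

lemma idOutside_inv (s : Finset (Fin n)) (E : Mat n) (hdet : IsUnit E.det)
    (hE : ∀ i j, i ∉ s ∨ j ∉ s → E i j = (1 : Mat n) i j) :
    ∀ i j, i ∉ s ∨ j ∉ s → E⁻¹ i j = (1 : Mat n) i j := by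
  intro i j h
  rcases h with h | h
  · have h1 : (E * E⁻¹) i j = (1 : Mat n) i j := by rw [Matrix.mul_nonsing_inv E hdet]
    rw [Matrix.mul_apply] at h1
    rw [sum_one (fun k => E i k * E⁻¹ k j) i (fun x hx => by
      show E i x * E⁻¹ x j = 0
      rw [hE i x (Or.inl h), Matrix.one_apply_ne (Ne.symm hx), zero_mul])] at h1
    rw [hE i i (Or.inl h), Matrix.one_apply_eq, one_mul] at h1
    exact h1
  · have h1 : (E⁻¹ * E) i j = (1 : Mat n) i j := by rw [Matrix.nonsing_inv_mul E hdet]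
    rw [Matrix.mul_apply] at h1
    rw [sum_one (fun k => E⁻¹ i k * E k j) j (fun x hx => by
      show E⁻¹ i x * E x j = 0
      rw [hE x j (Or.inr h), Matrix.one_apply_ne hx, mul_zero])] at h1
    rw [hE j j (Or.inr h), Matrix.one_apply_eq, mul_one] at h1
    exact h1



lemma pinv_diag (π' : Mat n) (h : IsPartialInvolution π') (p : Fin n)
    (hrow : ∀ j, π' p j = 0) (hcol : ∀ i, π' i p = 0) :
    IsPartialInvolution (π' + Matrix.single p p 1) := by
  obtain ⟨⟨h01, hrs, hcs⟩, hsym⟩ := h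
  set π := π' + Matrix.single p p (1:ℂ) with hπ
  have happ : ∀ i j, π i j = π' i j + (if p = i ∧ p = j then 1 else 0) := by
    intro i j; simp [hπ, Matrix.single]
  have hval : ∀ i j, π i j = if i = p ∧ j = p then 1 else π' i j := by
    intro i j
    rw [happ]
    by_cases h1 : i = p ∧ j = p
    · obtain ⟨h1a, h1b⟩ := h1
      rw [if_pos ⟨h1a.symm, h1b.symm⟩, if_pos ⟨h1a, h1b⟩, h1a, hrow, zero_add]
    · rw [if_neg (fun h => h1 ⟨h.1.symm, h.2.symm⟩), if_neg h1, add_zero]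
  refine ⟨⟨?_, ?_, ?_⟩, ?_⟩
  · intro i j
    rw [hval]
    by_cases h1 : i = p ∧ j = p
    · simp [h1]
    · simp [h1]; exact h01 i j
  · intro i x hx y hy
    simp only [Set.mem_setOf_eq] at hx hy
    rw [hval] at hx hy
    by_cases h1 : i = p
    · by_cases h2 : x = p
      · by_cases h3 : y = p
        · rw [h2, h3]
        · simp [h1, h3, hrow] at hy
      · simp [h1, h2, hrow] at hx
    · have h2 : ¬(i = p ∧ x = p) := fun h => h1 h.1
      have h3 : ¬(i = p ∧ y = p) := fun h => h1 h.1
      rw [if_neg h2] at hx; rw [if_neg h3] at hy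
      exact hrs i hx hy
  · intro j x hx y hy
    simp only [Set.mem_setOf_eq] at hx hy
    rw [hval] at hx hy
    by_cases h1 : j = p
    · by_cases h2 : x = p
      · by_cases h3 : y = p
        · rw [h2, h3]
        · simp [h1, h3, hcol] at hy
      · simp [h1, h2, hcol] at hx
    · have h2 : ¬(x = p ∧ j = p) := fun h => h1 h.2
      have h3 : ¬(y = p ∧ j = p) := fun h => h1 h.2
      rw [if_neg h2] at hx; rw [if_neg h3] at hy
      exact hcs j hx hy
  · apply Matrix.IsSymm.ext
    intro i j
    rw [hval, hval, hsym.apply]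
    by_cases h1 : i = p <;> by_cases h2 : j = p <;> simp [h1, h2, and_comm]

lemma pinv_off (π' : Mat n) (h : IsPartialInvolution π') (p q : Fin n) (hpq : p ≠ q)
    (hrow : ∀ x j, x = p ∨ x = q → π' x j = 0)
    (hcol : ∀ i x, x = p ∨ x = q → π' i x = 0) :
    IsPartialInvolution (π' + Matrix.single p q 1 + Matrix.single q p 1) := by
  obtain ⟨⟨h01, hrs, hcs⟩, hsym⟩ := h
  set π := π' + Matrix.single p q (1:ℂ) + Matrix.single q p (1:ℂ) with hπ
  have hval : ∀ i j, π i j = if (i = p ∧ j = q) ∨ (i = q ∧ j = p) then 1 else π' i j := by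
    intro i j
    have happ : π i j = π' i j + (if p = i ∧ q = j then 1 else 0)
        + (if q = i ∧ p = j then 1 else 0) := by
      simp [hπ, Matrix.single]
    rw [happ]
    by_cases hA : i = p ∧ j = q
    · obtain ⟨h1, h2⟩ := hA
      rw [if_pos ⟨h1.symm, h2.symm⟩,
        if_neg (fun h => hpq ((h.1.trans h1).symm)),
        if_pos (Or.inl ⟨h1, h2⟩), h1, hrow p j (Or.inl rfl)]
      norm_num
    · by_cases hB : i = q ∧ j = p
      · obtain ⟨h1, h2⟩ := hB
        rw [if_neg (fun h => hpq (h.1.trans h1)),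
          if_pos ⟨h1.symm, h2.symm⟩, if_pos (Or.inr ⟨h1, h2⟩), h1,
          hrow q j (Or.inr rfl)]
        norm_num
      · rw [if_neg (fun h : p = i ∧ q = j => hA ⟨h.1.symm, h.2.symm⟩),
          if_neg (fun h : q = i ∧ p = j => hB ⟨h.1.symm, h.2.symm⟩),
          if_neg (fun h => Or.elim h hA hB), add_zero, add_zero]
  refine ⟨⟨?_, ?_, ?_⟩, ?_⟩
  · intro i j
    rw [hval]
    by_cases h1 : (i = p ∧ j = q) ∨ (i = q ∧ j = p)
    · simp [h1]
    · simp [h1]; exact h01 i j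
  · intro i x hx y hy
    simp only [Set.mem_setOf_eq] at hx hy
    rw [hval] at hx hy
    by_cases h1 : i = p
    · have hx' : x = q := by
        by_contra hxq
        have : ¬((i = p ∧ x = q) ∨ (i = q ∧ x = p)) := by
          rintro (⟨_, h⟩ | ⟨h, _⟩); exact hxq h; exact hpq (h1.symm.trans h)
        rw [if_neg this] at hx
        rw [hrow i x (Or.inl h1)] at hx
        exact absurd hx.symm one_ne_zero
      have hy' : y = q := by
        by_contra hyq
        have : ¬((i = p ∧ y = q) ∨ (i = q ∧ y = p)) := by
          rintro (⟨_, h⟩ | ⟨h, _⟩); exact hyq h; exact hpq (h1.symm.trans h)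
        rw [if_neg this] at hy
        rw [hrow i y (Or.inl h1)] at hy
        exact absurd hy.symm one_ne_zero
      rw [hx', hy']
    · by_cases h2 : i = q
      · have hx' : x = p := by
          by_contra hxq
          have : ¬((i = p ∧ x = q) ∨ (i = q ∧ x = p)) := by
            rintro (⟨h, _⟩ | ⟨_, h⟩); exact h1 h; exact hxq h
          rw [if_neg this] at hx
          rw [hrow i x (Or.inr h2)] at hx
          exact absurd hx.symm one_ne_zero
        have hy' : y = p := by
          by_contra hyq
          have : ¬((i = p ∧ y = q) ∨ (i = q ∧ y = p)) := by
            rintro (⟨h, _⟩ | ⟨_, h⟩); exact h1 h; exact hyq h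
          rw [if_neg this] at hy
          rw [hrow i y (Or.inr h2)] at hy
          exact absurd hy.symm one_ne_zero
        rw [hx', hy']
      · have hc1 : ¬((i = p ∧ x = q) ∨ (i = q ∧ x = p)) := by
          rintro (⟨h, _⟩ | ⟨h, _⟩); exact h1 h; exact h2 h
        have hc2 : ¬((i = p ∧ y = q) ∨ (i = q ∧ y = p)) := by
          rintro (⟨h, _⟩ | ⟨h, _⟩); exact h1 h; exact h2 h
        rw [if_neg hc1] at hx; rw [if_neg hc2] at hy
        exact hrs i hx hy
  · intro j x hx y hy
    simp only [Set.mem_setOf_eq] at hx hy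
    rw [hval] at hx hy
    by_cases h1 : j = q
    · have hx' : x = p := by
        by_contra hxq
        have : ¬((x = p ∧ j = q) ∨ (x = q ∧ j = p)) := by
          rintro (⟨h, _⟩ | ⟨_, h⟩); exact hxq h; exact hpq (h.symm.trans h1)
        rw [if_neg this] at hx
        rw [hcol x j (Or.inr h1)] at hx
        exact absurd hx.symm one_ne_zero
      have hy' : y = p := by
        by_contra hyq
        have : ¬((y = p ∧ j = q) ∨ (y = q ∧ j = p)) := by
          rintro (⟨h, _⟩ | ⟨_, h⟩); exact hyq h; exact hpq (h.symm.trans h1)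
        rw [if_neg this] at hy
        rw [hcol y j (Or.inr h1)] at hy
        exact absurd hy.symm one_ne_zero
      rw [hx', hy']
    · by_cases h2 : j = p
      · have hx' : x = q := by
          by_contra hxq
          have : ¬((x = p ∧ j = q) ∨ (x = q ∧ j = p)) := by
            rintro (⟨_, h⟩ | ⟨h, _⟩); exact h1 h; exact hxq h
          rw [if_neg this] at hx
          rw [hcol x j (Or.inl h2)] at hx
          exact absurd hx.symm one_ne_zero
        have hy' : y = q := by
          by_contra hyq
          have : ¬((y = p ∧ j = q) ∨ (y = q ∧ j = p)) := by
            rintro (⟨_, h⟩ | ⟨h, _⟩); exact h1 h; exact hyq h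
          rw [if_neg this] at hy
          rw [hcol y j (Or.inl h2)] at hy
          exact absurd hy.symm one_ne_zero
        rw [hx', hy']
      · have hc1 : ¬((x = p ∧ j = q) ∨ (x = q ∧ j = p)) := by
          rintro (⟨_, h⟩ | ⟨_, h⟩); exact h1 h; exact h2 h
        have hc2 : ¬((y = p ∧ j = q) ∨ (y = q ∧ j = p)) := by
          rintro (⟨_, h⟩ | ⟨_, h⟩); exact h1 h; exact h2 h
        rw [if_neg hc1] at hx; rw [if_neg hc2] at hy
        exact hcs j hx hy
  · apply Matrix.IsSymm.ext
    intro i j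
    rw [hval, hval, hsym.apply]
    by_cases h1 : (j = p ∧ i = q) ∨ (j = q ∧ i = p)
    · rcases h1 with ⟨ha, hb⟩ | ⟨ha, hb⟩ <;> simp [ha, hb, hpq, Ne.symm hpq]
    · have h2 : ¬((i = p ∧ j = q) ∨ (i = q ∧ j = p)) := by
        rintro (⟨ha, hb⟩ | ⟨ha, hb⟩)
        · exact h1 (Or.inr ⟨hb, ha⟩)
        · exact h1 (Or.inl ⟨hb, ha⟩)
      rw [if_neg h1, if_neg h2]



lemma finish_step (s s' : Finset (Fin n)) (hss : s' ⊆ s) (S E P : Mat n)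
    (hEtri : ∀ i j, j < i → E i j = 0) (hEdet : IsUnit E.det)
    (hEout : ∀ i j, i ∉ s ∨ j ∉ s → E i j = (1 : Mat n) i j)
    (hPconj : ∀ B' : Mat n, (∀ i j, i ∉ s' ∨ j ∉ s' → B' i j = (1 : Mat n) i j) →
      B'ᵀ * P * B' = P)
    (hPinv : ∀ π' : Mat n, IsPartialInvolution π' →
      (∀ i j, i ∉ s' ∨ j ∉ s' → π' i j = 0) → IsPartialInvolution (π' + P))
    (hPsupp : ∀ i j, i ∉ s ∨ j ∉ s → P i j = 0)
    (hIH : ∃ B' π' : Mat n, IsUnit B'.det ∧ (∀ i j, j < i → B' i j = 0) ∧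
      (∀ i j, i ∉ s' ∨ j ∉ s' → B' i j = (1 : Mat n) i j) ∧ IsPartialInvolution π' ∧
      (∀ i j, i ∉ s' ∨ j ∉ s' → π' i j = 0) ∧ Eᵀ * S * E - P = B'ᵀ * π' * B') :
    ∃ B π : Mat n, IsUnit B.det ∧ (∀ i j, j < i → B i j = 0) ∧
      (∀ i j, i ∉ s ∨ j ∉ s → B i j = (1 : Mat n) i j) ∧ IsPartialInvolution π ∧
      (∀ i j, i ∉ s ∨ j ∉ s → π i j = 0) ∧ S = Bᵀ * π * B := by
  obtain ⟨B', π', hB'det, hB'tri, hB'out, hπ'inv, hπ'supp, hEq⟩ := hIH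
  haveI : Invertible E := E.invertibleOfIsUnitDet hEdet
  have hEinvTri : ∀ i j, j < i → E⁻¹ i j = 0 := by
    have h := Matrix.blockTriangular_inv_of_blockTriangular
      (M := E) (b := id) (fun i j h => hEtri i j h)
    exact fun i j hij => h hij
  have hEidet : IsUnit E⁻¹.det := by
    rw [Matrix.det_nonsing_inv]
    exact isUnit_ringInverse.mpr hEdet
  have hweak : ∀ i j : Fin n, (i ∉ s ∨ j ∉ s) → (i ∉ s' ∨ j ∉ s') :=
    fun i j h => h.imp (fun hi hm => hi (hss hm)) (fun hj hm => hj (hss hm))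
  have hEiout := idOutside_inv s E hEdet hEout
  refine ⟨B' * E⁻¹, π' + P, ?_, ?_, ?_, ?_, ?_, ?_⟩
  · rw [Matrix.det_mul]; exact hB'det.mul hEidet
  · have h := Matrix.BlockTriangular.mul (b := id) (M := B') (N := E⁻¹)
      (fun i j h => hB'tri i j h) (fun i j h => hEinvTri i j h)
    exact fun i j hij => h hij
  · exact idOutside_mul s B' E⁻¹ (fun i j h => hB'out i j (hweak i j h)) hEiout
  · exact hPinv π' hπ'inv hπ'supp
  · intro i j h
    rw [Matrix.add_apply, hπ'supp i j (hweak i j h), hPsupp i j h, add_zero]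
  · have h1 : Eᵀ * S * E = B'ᵀ * π' * B' + P := by
      rw [← hEq]; abel
    have h2 : B'ᵀ * P * B' = P := hPconj B' hB'out
    have h3 : Eᵀ * S * E = B'ᵀ * (π' + P) * B' := by
      rw [Matrix.mul_add, Matrix.add_mul, h2, h1]
    have hEE : E * E⁻¹ = 1 := Matrix.mul_nonsing_inv E hEdet
    calc S = 1ᵀ * S * 1 := by simp
      _ = (E * E⁻¹)ᵀ * S * (E * E⁻¹) := by rw [hEE]
      _ = (E⁻¹)ᵀ * (Eᵀ * S * E) * E⁻¹ := by
          simp only [Matrix.transpose_mul, Matrix.mul_assoc]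
      _ = (E⁻¹)ᵀ * (B'ᵀ * (π' + P) * B') * E⁻¹ := by rw [h3]
      _ = (B' * E⁻¹)ᵀ * (π' + P) * (B' * E⁻¹) := by
          simp only [Matrix.transpose_mul, Matrix.mul_assoc]



/-- The induction-hypothesis shape. -/
def IHshape (s : Finset (Fin n)) : Prop :=
  ∀ T : Mat n, T.IsSymm → (∀ i j, i ∉ s ∨ j ∉ s → T i j = 0) →
    ∃ B π : Mat n, IsUnit B.det ∧ (∀ i j, j < i → B i j = 0) ∧
      (∀ i j, i ∉ s ∨ j ∉ s → B i j = (1 : Mat n) i j) ∧ IsPartialInvolution π ∧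
      (∀ i j, i ∉ s ∨ j ∉ s → π i j = 0) ∧ T = Bᵀ * π * B

lemma caseA (s : Finset (Fin n)) (S : Mat n) (hsymm : S.IsSymm)
    (hsupp : ∀ i j, i ∉ s ∨ j ∉ s → S i j = 0) (i₀ : Fin n) (hi₀s : i₀ ∈ s)
    (ha : S i₀ i₀ ≠ 0) (hmincol : ∀ i j, S i j ≠ 0 → i₀ ≤ j)
    (hIH : IHshape (s.erase i₀)) :
    ∃ B π : Mat n, IsUnit B.det ∧ (∀ i j, j < i → B i j = 0) ∧
      (∀ i j, i ∉ s ∨ j ∉ s → B i j = (1 : Mat n) i j) ∧ IsPartialInvolution π ∧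
      (∀ i j, i ∉ s ∨ j ∉ s → π i j = 0) ∧ S = Bᵀ * π * B := by
  obtain ⟨r, hr⟩ := IsAlgClosed.exists_pow_nat_eq (S i₀ i₀) (n := 2) (by norm_num)
  have hrne : r ≠ 0 := by
    intro h; apply ha; rw [← hr, h]; ring
  obtain ⟨E, hEapp⟩ : ∃ E : Mat n, ∀ k j, E k j =
      if j = i₀ then (if k = i₀ then r⁻¹ else 0)
      else if k = i₀ then -(S i₀ j) / S i₀ i₀
      else if k = j then 1 else 0 := ⟨Matrix.of _, fun _ _ => rfl⟩
  have hEtri : ∀ i j, j < i → E i j = 0 := by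
    intro i j hij
    rw [hEapp]
    by_cases h1 : j = i₀
    · rw [if_pos h1, if_neg]
      intro h2
      exact hij.ne (h1.trans h2.symm)
    · rw [if_neg h1]
      by_cases h2 : i = i₀
      · rw [if_pos h2]
        have hz : S i₀ j = 0 := by
          by_contra hne
          exact absurd (hmincol i₀ j hne) (not_le.mpr (h2 ▸ hij))
        rw [hz]; simp
      · rw [if_neg h2, if_neg hij.ne']
  have hEdiag : ∀ i, E i i = if i = i₀ then r⁻¹ else 1 := by
    intro i; rw [hEapp]
    by_cases h : i = i₀ <;> simp [h]
  have hEdet : IsUnit E.det := by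
    have hdet : E.det = ∏ i, E i i :=
      Matrix.det_of_upperTriangular (fun i j h => hEtri i j h)
    rw [hdet]
    refine isUnit_iff_ne_zero.mpr (Finset.prod_ne_zero_iff.mpr fun i _ => ?_)
    rw [hEdiag]
    split
    · exact inv_ne_zero hrne
    · exact one_ne_zero
  have hEout : ∀ i j, i ∉ s ∨ j ∉ s → E i j = (1 : Mat n) i j := by
    intro i j h
    rw [hEapp, Matrix.one_apply]
    by_cases h1 : j = i₀
    · have hi : i ∉ s := by
        rcases h with h | h
        · exact h
        · exact absurd (h1 ▸ hi₀s) h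
      have hii : i ≠ i₀ := fun hc => hi (hc ▸ hi₀s)
      rw [if_pos h1, if_neg hii, if_neg (fun hc : i = j => hii (hc.trans h1))]
    · rw [if_neg h1]
      by_cases h2 : i = i₀
      · have hj : j ∉ s := by
          rcases h with h | h
          · exact absurd (h2 ▸ hi₀s) h
          · exact h
        rw [if_pos h2, hsupp i₀ j (Or.inr hj)]
        rw [if_neg (fun hc : i = j => h1 (hc ▸ h2 : j = i₀))]
        simp
      · rw [if_neg h2]
  -- entries of S * E
  have hM_i₀ : ∀ p, (S * E) p i₀ = S p i₀ * r⁻¹ := by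
    intro p
    rw [Matrix.mul_apply]
    rw [sum_one (fun k => S p k * E k i₀) i₀ (fun x hx => by
      show S p x * E x i₀ = 0
      rw [hEapp, if_pos rfl, if_neg hx, mul_zero])]
    show S p i₀ * E i₀ i₀ = _
    rw [hEapp]; simp
  have hM_j : ∀ p j, j ≠ i₀ →
      (S * E) p j = S p i₀ * (-(S i₀ j) / S i₀ i₀) + S p j := by
    intro p j hj
    rw [Matrix.mul_apply]
    rw [sum_two (fun k => S p k * E k j) i₀ j (Ne.symm hj) (fun x hx1 hx2 => by
      show S p x * E x j = 0
      rw [hEapp, if_neg hj, if_neg hx1, if_neg hx2, mul_zero])]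
    show S p i₀ * E i₀ j + S p j * E j j = _
    have e1 : E i₀ j = -(S i₀ j) / S i₀ i₀ := by rw [hEapp]; simp [hj]
    have e2 : E j j = 1 := by rw [hEapp]; simp [hj]
    rw [e1, e2, mul_one]
  have hT : ∀ i j, (Eᵀ * S * E) i j = ∑ k, E k i * (S * E) k j := by
    intro i j
    rw [Matrix.mul_assoc, Matrix.mul_apply]
    simp only [Matrix.transpose_apply]
  have hTrow : ∀ j, (Eᵀ * S * E) i₀ j = if j = i₀ then 1 else 0 := by
    intro j
    rw [hT]
    rw [sum_one (fun k => E k i₀ * (S * E) k j) i₀ (fun x hx => by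
      show E x i₀ * (S * E) x j = 0
      rw [hEapp, if_pos rfl, if_neg hx, zero_mul])]
    show E i₀ i₀ * (S * E) i₀ j = _
    have e0 : E i₀ i₀ = r⁻¹ := by rw [hEapp]; simp
    by_cases hj : j = i₀
    · rw [if_pos hj, hj, e0, hM_i₀, ← hr]
      field_simp
    · rw [if_neg hj, e0, hM_j i₀ j hj]
      have e3 : S i₀ i₀ * (-(S i₀ j) / S i₀ i₀) = -(S i₀ j) := by field_simp
      rw [e3]
      ring
  have hTs : ∀ i j, (Eᵀ * S * E) i j = (Eᵀ * S * E) j i := by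
    have h : (Eᵀ * S * E)ᵀ = Eᵀ * S * E := by
      rw [Matrix.transpose_mul, Matrix.transpose_mul, Matrix.transpose_transpose,
        hsymm.eq, Matrix.mul_assoc]
    intro i j
    conv_rhs => rw [← h]
    rw [Matrix.transpose_apply]
  have hTsuppR : ∀ i j, j ∉ s → (Eᵀ * S * E) i j = 0 := by
    intro i j hj
    have hM0 : ∀ k, (S * E) k j = 0 := by
      intro k
      rw [Matrix.mul_apply]
      rw [sum_one (fun l => S k l * E l j) j (fun x hx => by
        show S k x * E x j = 0
        rw [hEout x j (Or.inr hj), Matrix.one_apply_ne hx, mul_zero])]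
      show S k j * E j j = 0
      rw [hsupp k j (Or.inr hj), zero_mul]
    rw [hT]
    refine Finset.sum_eq_zero fun k _ => ?_
    show E k i * (S * E) k j = 0
    rw [hM0 k, mul_zero]
  have hTsupp : ∀ i j, i ∉ s ∨ j ∉ s → (Eᵀ * S * E) i j = 0 := by
    intro i j h
    rcases h with h | h
    · rw [hTs i j]; exact hTsuppR j i h
    · exact hTsuppR i j h
  -- apply finish_step
  set P : Mat n := Matrix.single i₀ i₀ 1 with hPdef
  have hi₀' : i₀ ∉ s.erase i₀ := Finset.notMem_erase _ _
  have hPsupp : ∀ i j, i ∉ s ∨ j ∉ s → P i j = 0 := by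
    intro i j h
    simp only [hPdef, Matrix.single, Matrix.of_apply]
    rw [if_neg]
    rintro ⟨h1, h2⟩
    rcases h with h | h
    · exact h (h1 ▸ hi₀s)
    · exact h (h2 ▸ hi₀s)
  have hPsym : ∀ i j, P i j = P j i := by
    intro i j
    simp only [hPdef, Matrix.single, Matrix.of_apply]
    by_cases h1 : i₀ = i <;> by_cases h2 : i₀ = j <;> simp [h1, h2]
  have hs'mem : ∀ x : Fin n, x ∉ s.erase i₀ → x = i₀ ∨ x ∉ s := by
    intro x hx
    by_cases h1 : x = i₀
    · exact Or.inl h1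
    · right; intro hc; exact hx (Finset.mem_erase.mpr ⟨h1, hc⟩)
  have hProw : ∀ j, P i₀ j = if j = i₀ then 1 else 0 := by
    intro j
    simp only [hPdef, Matrix.single, Matrix.of_apply]
    by_cases h : j = i₀
    · simp [h]
    · rw [if_neg (fun hc => h hc.2.symm), if_neg h]
  have hT0supp : ∀ i j, i ∉ s.erase i₀ ∨ j ∉ s.erase i₀ → (Eᵀ * S * E - P) i j = 0 := by
    intro i j h
    rw [Matrix.sub_apply]
    rcases h with h | h
    · rcases hs'mem i h with h1 | h1
      · rw [h1, hTrow j, hProw j, sub_self]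
      · rw [hTsupp i j (Or.inl h1), hPsupp i j (Or.inl h1), sub_self]
    · rcases hs'mem j h with h1 | h1
      · rw [hTs i j, hPsym i j, h1, hTrow i, hProw i, sub_self]
      · rw [hTsupp i j (Or.inr h1), hPsupp i j (Or.inr h1), sub_self]
  have hT0symm : (Eᵀ * S * E - P).IsSymm := by
    apply Matrix.IsSymm.ext
    intro i j
    rw [Matrix.sub_apply, Matrix.sub_apply, hTs j i, hPsym j i]
  refine finish_step s (s.erase i₀) (Finset.erase_subset _ _) S E P hEtri hEdet hEout
    (fun B' hB' => conj_pivot B' _ hB' i₀ i₀ hi₀' hi₀') ?_ hPsupp ?_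
  · exact fun π' h hsupp' => pinv_diag π' h i₀
      (fun j => hsupp' i₀ j (Or.inl hi₀')) (fun i => hsupp' i i₀ (Or.inr hi₀'))
  · exact hIH _ hT0symm hT0supp

lemma caseB (s : Finset (Fin n)) (S : Mat n) (hsymm : S.IsSymm)
    (hsupp : ∀ i j, i ∉ s ∨ j ∉ s → S i j = 0) (i₀ c : Fin n) (hic : i₀ < c)
    (hi₀s : i₀ ∈ s) (hcs : c ∈ s) (hac : S i₀ c ≠ 0)
    (hminrow : ∀ i j, S i j ≠ 0 → i₀ ≤ i) (hmincol : ∀ i j, S i j ≠ 0 → i₀ ≤ j)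
    (hcmin : ∀ j, S i₀ j ≠ 0 → c ≤ j)
    (hIH : IHshape ((s.erase i₀).erase c)) :
    ∃ B π : Mat n, IsUnit B.det ∧ (∀ i j, j < i → B i j = 0) ∧
      (∀ i j, i ∉ s ∨ j ∉ s → B i j = (1 : Mat n) i j) ∧ IsPartialInvolution π ∧
      (∀ i j, i ∉ s ∨ j ∉ s → π i j = 0) ∧ S = Bᵀ * π * B := by
  have hcne : c ≠ i₀ := hic.ne'
  have hS00 : S i₀ i₀ = 0 := by
    by_contra h
    exact absurd (hcmin i₀ h) (not_le.mpr hic)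
  have hSci₀ : S c i₀ = S i₀ c := hsymm.apply i₀ c
  obtain ⟨E, hEapp⟩ : ∃ E : Mat n, ∀ k j, E k j =
      if j = i₀ then (if k = i₀ then 1 else 0)
      else if j = c then
        (if k = c then (S i₀ c)⁻¹
         else if k = i₀ then -(S c c / (2 * S i₀ c * S i₀ c)) else 0)
      else if k = j then 1
      else if k = c then -(S i₀ j) / S i₀ c
      else if k = i₀ then -((S c j - S i₀ j * S c c / S i₀ c) / S i₀ c)
      else 0 := ⟨Matrix.of _, fun _ _ => rfl⟩
  have hEtri : ∀ i j, j < i → E i j = 0 := by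
    intro i j hij
    rw [hEapp]
    by_cases h1 : j = i₀
    · rw [if_pos h1, if_neg (fun h2 => hij.ne (h1.trans h2.symm))]
    · rw [if_neg h1]
      by_cases h2 : j = c
      · have hic' : i ≠ c := (h2 ▸ hij).ne'
        have hii : i ≠ i₀ := (lt_trans hic (h2 ▸ hij)).ne'
        rw [if_pos h2, if_neg hic', if_neg hii]
      · rw [if_neg h2, if_neg hij.ne']
        by_cases h3 : i = c
        · rw [if_pos h3]
          have hz : S i₀ j = 0 := by
            by_contra hne
            exact absurd (hcmin j hne) (not_le.mpr (h3 ▸ hij))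
          rw [hz]; simp
        · rw [if_neg h3]
          by_cases h4 : i = i₀
          · rw [if_pos h4]
            have hz1 : S c j = 0 := by
              by_contra hne
              exact absurd (hmincol c j hne) (not_le.mpr (h4 ▸ hij))
            have hz2 : S i₀ j = 0 := by
              by_contra hne
              exact absurd (hcmin j hne) (not_le.mpr (lt_trans (h4 ▸ hij) hic))
            rw [hz1, hz2]; simp
          · rw [if_neg h4]
  have hEdet : IsUnit E.det := by
    have hdet : E.det = ∏ i, E i i :=
      Matrix.det_of_upperTriangular (fun i j h => hEtri i j h)
    rw [hdet]
    refine isUnit_iff_ne_zero.mpr (Finset.prod_ne_zero_iff.mpr fun i _ => ?_)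
    rw [hEapp]
    by_cases h1 : i = i₀
    · simp [h1]
    · by_cases h2 : i = c
      · rw [if_neg h1, if_pos h2, if_pos h2]
        exact inv_ne_zero hac
      · rw [if_neg h1, if_neg h2, if_pos rfl]
        exact one_ne_zero
  have hEout : ∀ i j, i ∉ s ∨ j ∉ s → E i j = (1 : Mat n) i j := by
    intro i j h
    rw [hEapp, Matrix.one_apply]
    by_cases h1 : j = i₀
    · have hi : i ∉ s := by
        rcases h with h | h
        · exact h
        · exact absurd (h1 ▸ hi₀s) h
      have hii : i ≠ i₀ := fun hx => hi (hx ▸ hi₀s)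
      rw [if_pos h1, if_neg hii, if_neg (fun hx : i = j => hii (hx.trans h1))]
    · rw [if_neg h1]
      by_cases h2 : j = c
      · have hi : i ∉ s := by
          rcases h with h | h
          · exact h
          · exact absurd (h2 ▸ hcs) h
        have hii : i ≠ i₀ := fun hx => hi (hx ▸ hi₀s)
        have hicc : i ≠ c := fun hx => hi (hx ▸ hcs)
        rw [if_pos h2, if_neg hicc, if_neg hii, if_neg (fun hx : i = j => hicc (hx.trans h2))]
      · rw [if_neg h2]
        by_cases hj : j ∉ s
        · have hz1 : S i₀ j = 0 := hsupp i₀ j (Or.inr hj)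
          have hz2 : S c j = 0 := hsupp c j (Or.inr hj)
          by_cases hij : i = j
          · rw [if_pos hij, if_pos hij]
          · rw [if_neg hij, if_neg hij]
            by_cases h3 : i = c
            · rw [if_pos h3, hz1]; simp
            · rw [if_neg h3]
              by_cases h4 : i = i₀
              · rw [if_pos h4, hz1, hz2]; simp
              · rw [if_neg h4]
        · have hi : i ∉ s := by
            rcases h with h | h
            · exact h
            · exact absurd h hj
          have hii : i ≠ i₀ := fun hx => hi (hx ▸ hi₀s)
          have hicc : i ≠ c := fun hx => hi (hx ▸ hcs)
          have hij : i ≠ j := fun hx => hi (hx ▸ (not_not.mp hj))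
          rw [if_neg hij, if_neg hicc, if_neg hii, if_neg hij]
  -- entries of S * E
  have hM_i₀ : ∀ p, (S * E) p i₀ = S p i₀ := by
    intro p
    rw [Matrix.mul_apply]
    rw [sum_one (fun k => S p k * E k i₀) i₀ (fun x hx => by
      show S p x * E x i₀ = 0
      rw [hEapp, if_pos rfl, if_neg hx, mul_zero])]
    show S p i₀ * E i₀ i₀ = _
    rw [hEapp]; simp
  have hM_c : ∀ p, (S * E) p c =
      S p c * (S i₀ c)⁻¹ + S p i₀ * (-(S c c / (2 * S i₀ c * S i₀ c))) := by
    intro p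
    rw [Matrix.mul_apply]
    rw [sum_two (fun k => S p k * E k c) c i₀ hcne (fun x hx1 hx2 => by
      show S p x * E x c = 0
      rw [hEapp, if_neg hcne, if_pos rfl, if_neg hx1, if_neg hx2, mul_zero])]
    show S p c * E c c + S p i₀ * E i₀ c = _
    have e1 : E c c = (S i₀ c)⁻¹ := by rw [hEapp]; simp [hcne]
    have e2 : E i₀ c = -(S c c / (2 * S i₀ c * S i₀ c)) := by
      rw [hEapp]; simp [hcne, Ne.symm hcne]
    rw [e1, e2]
  have hM_j : ∀ p j, j ≠ i₀ → j ≠ c → (S * E) p j =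
      S p j + S p c * (-(S i₀ j) / S i₀ c)
        + S p i₀ * (-((S c j - S i₀ j * S c c / S i₀ c) / S i₀ c)) := by
    intro p j hj1 hj2
    rw [Matrix.mul_apply]
    rw [sum_three (fun k => S p k * E k j) j c i₀ hj2 hj1 hcne (fun x hx1 hx2 hx3 => by
      show S p x * E x j = 0
      rw [hEapp, if_neg hj1, if_neg hj2, if_neg hx1, if_neg hx2, if_neg hx3, mul_zero])]
    show S p j * E j j + S p c * E c j + S p i₀ * E i₀ j = _
    have e1 : E j j = 1 := by rw [hEapp]; simp [hj1, hj2]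
    have e2 : E c j = -(S i₀ j) / S i₀ c := by
      rw [hEapp, if_neg hj1, if_neg hj2, if_neg (Ne.symm hj2), if_pos rfl]
    have e3 : E i₀ j = -((S c j - S i₀ j * S c c / S i₀ c) / S i₀ c) := by
      rw [hEapp, if_neg hj1, if_neg hj2, if_neg (Ne.symm hj1), if_neg (Ne.symm hcne),
        if_pos rfl]
    rw [e1, e2, e3, mul_one]
  have hT : ∀ i j, (Eᵀ * S * E) i j = ∑ k, E k i * (S * E) k j := by
    intro i j
    rw [Matrix.mul_assoc, Matrix.mul_apply]
    simp only [Matrix.transpose_apply]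
  have hTrow_i₀ : ∀ j, (Eᵀ * S * E) i₀ j = if j = c then 1 else 0 := by
    intro j
    rw [hT]
    rw [sum_one (fun k => E k i₀ * (S * E) k j) i₀ (fun x hx => by
      show E x i₀ * (S * E) x j = 0
      rw [hEapp, if_pos rfl, if_neg hx, zero_mul])]
    show E i₀ i₀ * (S * E) i₀ j = _
    have e0 : E i₀ i₀ = 1 := by rw [hEapp]; simp
    rw [e0, one_mul]
    by_cases hj1 : j = i₀
    · rw [hj1, hM_i₀, hS00, if_neg (Ne.symm hcne)]
    · by_cases hj2 : j = c
      · rw [hj2, hM_c, hS00, if_pos rfl]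
        field_simp
        ring
      · rw [hM_j i₀ j hj1 hj2, hS00, if_neg hj2]
        field_simp
        ring
  have hTrow_c : ∀ j, (Eᵀ * S * E) c j = if j = i₀ then 1 else 0 := by
    intro j
    rw [hT]
    rw [sum_two (fun k => E k c * (S * E) k j) c i₀ hcne (fun x hx1 hx2 => by
      show E x c * (S * E) x j = 0
      rw [hEapp, if_neg hcne, if_pos rfl, if_neg hx1, if_neg hx2, zero_mul])]
    show E c c * (S * E) c j + E i₀ c * (S * E) i₀ j = _
    have e1 : E c c = (S i₀ c)⁻¹ := by rw [hEapp]; simp [hcne]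
    have e2 : E i₀ c = -(S c c / (2 * S i₀ c * S i₀ c)) := by
      rw [hEapp]; simp [hcne, Ne.symm hcne]
    rw [e1, e2]
    by_cases hj1 : j = i₀
    · rw [hj1, hM_i₀, hM_i₀, hSci₀, hS00, if_pos rfl]
      field_simp
      ring
    · by_cases hj2 : j = c
      · rw [hj2, hM_c, hM_c, hSci₀, hS00, if_neg hcne]
        field_simp
        ring
      · rw [hM_j c j hj1 hj2, hM_j i₀ j hj1 hj2, hSci₀, hS00, if_neg hj1]
        field_simp
        ring
  have hTs : ∀ i j, (Eᵀ * S * E) i j = (Eᵀ * S * E) j i := by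
    have h : (Eᵀ * S * E)ᵀ = Eᵀ * S * E := by
      rw [Matrix.transpose_mul, Matrix.transpose_mul, Matrix.transpose_transpose,
        hsymm.eq, Matrix.mul_assoc]
    intro i j
    conv_rhs => rw [← h]
    rw [Matrix.transpose_apply]
  have hTsuppR : ∀ i j, j ∉ s → (Eᵀ * S * E) i j = 0 := by
    intro i j hj
    have hM0 : ∀ k, (S * E) k j = 0 := by
      intro k
      rw [Matrix.mul_apply]
      rw [sum_one (fun l => S k l * E l j) j (fun x hx => by
        show S k x * E x j = 0
        rw [hEout x j (Or.inr hj), Matrix.one_apply_ne hx, mul_zero])]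
      show S k j * E j j = 0
      rw [hsupp k j (Or.inr hj), zero_mul]
    rw [hT]
    refine Finset.sum_eq_zero fun k _ => ?_
    show E k i * (S * E) k j = 0
    rw [hM0 k, mul_zero]
  have hTsupp : ∀ i j, i ∉ s ∨ j ∉ s → (Eᵀ * S * E) i j = 0 := by
    intro i j h
    rcases h with h | h
    · rw [hTs i j]; exact hTsuppR j i h
    · exact hTsuppR i j h
  -- apply finish_step
  set P : Mat n := Matrix.single i₀ c 1 + Matrix.single c i₀ 1 with hPdef
  set s'' : Finset (Fin n) := (s.erase i₀).erase c with hs''def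
  have hi₀'' : i₀ ∉ s'' := by
    intro h
    exact (Finset.notMem_erase i₀ s) (Finset.mem_of_mem_erase h)
  have hc'' : c ∉ s'' := Finset.notMem_erase _ _
  have hPapp : ∀ i j, P i j =
      (if i₀ = i ∧ c = j then 1 else 0) + (if c = i ∧ i₀ = j then 1 else 0) := by
    intro i j
    simp [hPdef, Matrix.single]
  have hPsupp : ∀ i j, i ∉ s ∨ j ∉ s → P i j = 0 := by
    intro i j h
    rw [hPapp, if_neg, if_neg]
    · norm_num
    · rintro ⟨h1, h2⟩
      rcases h with h | h
      · exact h (h1 ▸ hcs)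
      · exact h (h2 ▸ hi₀s)
    · rintro ⟨h1, h2⟩
      rcases h with h | h
      · exact h (h1 ▸ hi₀s)
      · exact h (h2 ▸ hcs)
  have hPsym : ∀ i j, P i j = P j i := by
    intro i j
    rw [hPapp, hPapp]
    by_cases hA : i₀ = i ∧ c = j
    · rw [if_pos hA, if_neg (fun h : c = i ∧ i₀ = j => hcne (h.1.trans hA.1.symm)),
        if_neg (fun h : i₀ = j ∧ c = i => hcne (h.2.trans hA.1.symm)),
        if_pos ⟨hA.2, hA.1⟩]
      norm_num
    · rw [if_neg hA, if_neg (fun h : c = j ∧ i₀ = i => hA ⟨h.2, h.1⟩)]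
      by_cases hB : c = i ∧ i₀ = j
      · rw [if_pos hB, if_pos ⟨hB.2, hB.1⟩]
        norm_num
      · rw [if_neg hB, if_neg (fun h : i₀ = j ∧ c = i => hB ⟨h.2, h.1⟩)]
  have hProw_i₀ : ∀ j, P i₀ j = if j = c then 1 else 0 := by
    intro j
    rw [hPapp, if_neg (fun h : c = i₀ ∧ i₀ = j => hcne h.1), add_zero]
    by_cases h : j = c
    · rw [if_pos ⟨rfl, h.symm⟩, if_pos h]
    · rw [if_neg (fun hh => h hh.2.symm), if_neg h]
  have hProw_c : ∀ j, P c j = if j = i₀ then 1 else 0 := by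
    intro j
    rw [hPapp, if_neg (fun h : i₀ = c ∧ c = j => hcne h.1.symm), zero_add]
    by_cases h : j = i₀
    · rw [if_pos ⟨rfl, h.symm⟩, if_pos h]
    · rw [if_neg (fun hh => h hh.2.symm), if_neg h]
  have hs''mem : ∀ x : Fin n, x ∉ s'' → x = c ∨ x = i₀ ∨ x ∉ s := by
    intro x hx
    by_cases h1 : x = c
    · exact Or.inl h1
    · by_cases h2 : x = i₀
      · exact Or.inr (Or.inl h2)
      · refine Or.inr (Or.inr fun hc' => ?_)
        exact hx (Finset.mem_erase.mpr ⟨h1, Finset.mem_erase.mpr ⟨h2, hc'⟩⟩)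
  have hT0entry : ∀ i j, i ∉ s'' ∨ j ∉ s'' → (Eᵀ * S * E - P) i j = 0 := by
    intro i j h
    rw [Matrix.sub_apply]
    rcases h with h | h
    · rcases hs''mem i h with h1 | h1 | h1
      · rw [h1, hTrow_c j, hProw_c j, sub_self]
      · rw [h1, hTrow_i₀ j, hProw_i₀ j, sub_self]
      · rw [hTsupp i j (Or.inl h1), hPsupp i j (Or.inl h1), sub_self]
    · rcases hs''mem j h with h1 | h1 | h1
      · rw [hTs i j, hPsym i j, h1, hTrow_c i, hProw_c i, sub_self]
      · rw [hTs i j, hPsym i j, h1, hTrow_i₀ i, hProw_i₀ i, sub_self]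
      · rw [hTsupp i j (Or.inr h1), hPsupp i j (Or.inr h1), sub_self]
  have hT0symm : (Eᵀ * S * E - P).IsSymm := by
    apply Matrix.IsSymm.ext
    intro i j
    rw [Matrix.sub_apply, Matrix.sub_apply, hTs j i, hPsym j i]
  refine finish_step s s'' (fun x hx => Finset.mem_of_mem_erase (Finset.mem_of_mem_erase hx))
    S E P hEtri hEdet hEout ?_ ?_ hPsupp ?_
  · intro B' hB'
    rw [hPdef, Matrix.mul_add, Matrix.add_mul,
      conj_pivot B' s'' hB' i₀ c hi₀'' hc'', conj_pivot B' s'' hB' c i₀ hc'' hi₀'']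
  · intro π' h hsupp'
    have hr1 : ∀ x j, x = i₀ ∨ x = c → π' x j = 0 := by
      intro x j hx
      apply hsupp' x j
      left
      rcases hx with h' | h'
      · rw [h']; exact hi₀''
      · rw [h']; exact hc''
    have hr2 : ∀ i x, x = i₀ ∨ x = c → π' i x = 0 := by
      intro i x hx
      apply hsupp' i x
      right
      rcases hx with h' | h'
      · rw [h']; exact hi₀''
      · rw [h']; exact hc''
    have hp := pinv_off π' h i₀ c hic.ne hr1 hr2
    rw [hPdef, ← add_assoc]
    exact hp
  · exact hIH _ hT0symm hT0entry


lemma key (s : Finset (Fin n)) : IHshape s := by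
  induction s using Finset.strongInductionOn with
  | _ s ih =>
    intro S hsymm hsupp
    by_cases hS0 : S = 0
    · refine ⟨1, 0, by simp, fun i j hij => Matrix.one_apply_ne hij.ne', fun i j _ => rfl,
        ⟨⟨fun i j => Or.inl rfl, ?_, ?_⟩, Matrix.IsSymm.ext fun i j => rfl⟩,
        fun i j _ => rfl, by rw [hS0]; simp⟩
      · intro i x hx
        exfalso
        simp only [Set.mem_setOf_eq, Matrix.zero_apply] at hx
        exact zero_ne_one hx
      · intro j x hx
        exfalso
        simp only [Set.mem_setOf_eq, Matrix.zero_apply] at hx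
        exact zero_ne_one hx
    · have hne : ∃ i j, S i j ≠ 0 := by
        by_contra h
        push_neg at h
        exact hS0 (by ext i j; simpa using h i j)
      classical
      set R := Finset.univ.filter (fun i : Fin n => ∃ j, S i j ≠ 0) with hR
      have hRne : R.Nonempty := by
        obtain ⟨i, j, hij⟩ := hne
        exact ⟨i, Finset.mem_filter.mpr ⟨Finset.mem_univ _, j, hij⟩⟩
      set i₀ := R.min' hRne with hi₀def
      have hi₀R : i₀ ∈ R := Finset.min'_mem _ _
      obtain ⟨j₀, hj₀⟩ : ∃ j, S i₀ j ≠ 0 := (Finset.mem_filter.mp hi₀R).2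
      have hminrow : ∀ i j, S i j ≠ 0 → i₀ ≤ i := fun i j h =>
        Finset.min'_le R i (Finset.mem_filter.mpr ⟨Finset.mem_univ _, j, h⟩)
      have hmincol : ∀ i j, S i j ≠ 0 → i₀ ≤ j := fun i j h =>
        hminrow j i ((hsymm.apply i j).symm ▸ h)
      set C := Finset.univ.filter (fun j : Fin n => S i₀ j ≠ 0) with hC
      have hCne : C.Nonempty := ⟨j₀, Finset.mem_filter.mpr ⟨Finset.mem_univ _, hj₀⟩⟩
      set c := C.min' hCne with hcdef
      have hcC : c ∈ C := Finset.min'_mem _ _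
      have hc : S i₀ c ≠ 0 := (Finset.mem_filter.mp hcC).2
      have hcmin : ∀ j, S i₀ j ≠ 0 → c ≤ j := fun j h =>
        Finset.min'_le C j (Finset.mem_filter.mpr ⟨Finset.mem_univ _, h⟩)
      have hi₀s : i₀ ∈ s := by
        by_contra h
        exact hc (hsupp i₀ c (Or.inl h))
      have hcs : c ∈ s := by
        by_contra h
        exact hc (hsupp i₀ c (Or.inr h))
      have hic : i₀ ≤ c := hmincol i₀ c hc
      rcases eq_or_lt_of_le hic with hdiag | hoff
      · have ha := hc
        rw [← hdiag] at ha
        exact caseA s S hsymm hsupp i₀ hi₀s ha hmincol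
          (ih _ (Finset.erase_ssubset hi₀s))
      · exact caseB s S hsymm hsupp i₀ c hoff hi₀s hcs hc hminrow hmincol hcmin
          (ih _ (Finset.ssubset_of_subset_of_ssubset (Finset.erase_subset _ _)
            (Finset.erase_ssubset hi₀s)))

end Stmt7Aux

theorem stmt7 {n : ℕ} (S : Matrix (Fin n) (Fin n) ℂ) (hS : S.IsSymm) :
    ∃ (B π : Matrix (Fin n) (Fin n) ℂ),
      IsUnit B.det ∧ (∀ i j : Fin n, j < i → B i j = 0) ∧
      IsPartialInvolution π ∧ S = Bᵀ * π * B := by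
  obtain ⟨B, π, hdet, htri, _, hinv, _, heq⟩ := Stmt7Aux.key (n := n) Finset.univ S hS
    (fun i j h => h.elim (fun hi => absurd (Finset.mem_univ i) hi)
      (fun hj => absurd (Finset.mem_univ j) hj))
  exact ⟨B, π, hdet, htri, hinv, heq⟩
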